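/- Let A = diag(1, 2·2^{1/3}) and let Y be the 2×2 matrix [[4, 3·2^{1/4} + 6·2^{3/4}], [3·2^{1/4} + 6·2^{3/4}, 32]]. Then Y is not positive semidefinite, yet the 2×2 matrix X = [[4/3, c], [c, 4·2^{1/3}/3]], where c = (3·2^{1/4} + 6·2^{3/4})/(1 + 2·2^{1/3} + 4·2^{2/3}), satisfies the matrix equation A^{2} X + A X A + X A^{2} = Y and X is Hermitian positive definite. -/

import Mathlib

open scoped ComplexOrder

/-- The matrix `A = diag(1, 2·2^{1/3})`. -/
noncomputable def A13 : Matrix (Fin 2) (Fin 2) ℂ :=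
  Matrix.diagonal ![1, (((2 * (2 : ℝ) ^ ((1 : ℝ) / 3)) : ℝ) : ℂ)]

/-- The off-diagonal entry `3·2^{1/4} + 6·2^{3/4}` of `Y`. -/
noncomputable def d13 : ℝ := 3 * (2 : ℝ) ^ ((1 : ℝ) / 4) + 6 * (2 : ℝ) ^ ((3 : ℝ) / 4)

/-- The matrix `Y = [[4, 3·2^{1/4} + 6·2^{3/4}], [3·2^{1/4} + 6·2^{3/4}, 32]]`. -/
noncomputable def Y13 : Matrix (Fin 2) (Fin 2) ℂ :=
  !![(4 : ℂ), (d13 : ℂ); (d13 : ℂ), (32 : ℂ)]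

/-- The off-diagonal entry `c = (3·2^{1/4} + 6·2^{3/4}) / (1 + 2·2^{1/3} + 4·2^{2/3})`. -/
noncomputable def c13 : ℝ :=
  d13 / (1 + 2 * (2 : ℝ) ^ ((1 : ℝ) / 3) + 4 * (2 : ℝ) ^ ((2 : ℝ) / 3))

/-- The matrix `X = [[4/3, c], [c, 4·2^{1/3}/3]]`. -/
noncomputable def X13 : Matrix (Fin 2) (Fin 2) ℂ :=
  !![((4 : ℝ) / 3 : ℂ), (c13 : ℂ); (c13 : ℂ), (((4 * (2 : ℝ) ^ ((1 : ℝ) / 3) / 3) : ℝ) : ℂ)]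

lemma s4_13 : ((2:ℝ) ^ ((1:ℝ)/4)) ^ 4 = 2 := by
  rw [← Real.rpow_natCast ((2:ℝ) ^ ((1:ℝ)/4)) 4, ← Real.rpow_mul (by norm_num)]
  norm_num

lemma s34_13 : (2:ℝ) ^ ((3:ℝ)/4) = ((2:ℝ) ^ ((1:ℝ)/4)) ^ 3 := by
  rw [← Real.rpow_natCast ((2:ℝ) ^ ((1:ℝ)/4)) 3, ← Real.rpow_mul (by norm_num)]
  norm_num

lemma spos_13 : (0:ℝ) < (2:ℝ) ^ ((1:ℝ)/4) := Real.rpow_pos_of_pos (by norm_num) _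

lemma dsq_13 : d13 ^ 2 > 128 := by
  have h := s4_13
  have h2 := spos_13
  rw [d13, s34_13]
  set s := (2:ℝ) ^ ((1:ℝ)/4)
  nlinarith [sq_nonneg (s^2 - 1.4), sq_nonneg s, sq_nonneg (s-1)]

lemma r3_13 : ((2:ℝ) ^ ((1:ℝ)/3)) ^ 3 = 2 := by
  rw [← Real.rpow_natCast ((2:ℝ) ^ ((1:ℝ)/3)) 3, ← Real.rpow_mul (by norm_num)]
  norm_num

lemma r23_13 : (2:ℝ) ^ ((2:ℝ)/3) = ((2:ℝ) ^ ((1:ℝ)/3)) ^ 2 := by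
  rw [← Real.rpow_natCast ((2:ℝ) ^ ((1:ℝ)/3)) 2, ← Real.rpow_mul (by norm_num)]
  norm_num

lemma rpos_13 : (0:ℝ) < (2:ℝ) ^ ((1:ℝ)/3) := Real.rpow_pos_of_pos (by norm_num) _

/-- The key bound: `c13² < 16·2^{1/3}/9`. -/
lemma csq_13 : c13 ^ 2 < 16 * (2:ℝ) ^ ((1:ℝ)/3) / 9 := by
  have hr := r3_13
  have hrp := rpos_13
  have hs := s4_13
  have hsp := spos_13
  set r := (2:ℝ) ^ ((1:ℝ)/3)
  set s := (2:ℝ) ^ ((1:ℝ)/4)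
  have hD : (0:ℝ) < 1 + 2*r + 4*r^2 := by positivity
  have hcval : c13 = d13 / (1 + 2*r + 4*r^2) := by
    rw [c13, r23_13]
  have hd : d13 = 3*s + 6*s^3 := by rw [d13, s34_13]
  rw [hcval, div_pow, div_lt_iff₀ (by positivity)]
  have hrlb : r > 1.25 := by nlinarith [sq_nonneg (r - 1.25), sq_nonneg r]
  have hsub : s^2 < 1.42 := by nlinarith [sq_nonneg (s^2 - 1.42)]
  rw [hd]
  nlinarith [sq_nonneg r, sq_nonneg s, mul_pos hrp hrp]

/-- Remark 2.3: `Y13` is not positive semidefinite, yet `X13` solves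
`A² X + A X A + X A² = Y` and is Hermitian positive definite. -/
theorem stmt_13 :
    ¬ Y13.PosSemidef ∧
    (A13 ^ 2 * X13 + A13 * X13 * A13 + X13 * A13 ^ 2 = Y13) ∧
    X13.PosDef := by
  refine ⟨?_, ?_, ?_⟩
  · -- not PosSemidef
    rw [Matrix.posSemidef_iff_dotProduct_mulVec]
    rintro ⟨-, h⟩
    have h2 := h ![(d13:ℂ), -4]
    have hval : dotProduct (star ![(d13:ℂ), -4]) (Y13.mulVec ![(d13:ℂ), -4])
        = ((512 - 4 * d13^2 : ℝ) : ℂ) := by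
      simp [Y13, Matrix.mulVec, dotProduct, Fin.sum_univ_two, Complex.conj_ofNat]
      ring
    rw [hval] at h2
    rw [Complex.zero_le_real] at h2
    have := dsq_13
    linarith
  · -- the equation
    have e13 : ((1:ℝ)/3) = ((3:ℝ))⁻¹ := by norm_num
    have m1 : (2:ℝ) ^ ((3:ℝ))⁻¹ * (2:ℝ) ^ ((3:ℝ))⁻¹ = (2:ℝ) ^ ((2:ℝ)/3) := by
      rw [← Real.rpow_add (by norm_num : (0:ℝ) < 2)]; norm_num
    have hcube : (2:ℝ) ^ ((3:ℝ))⁻¹ * (2:ℝ) ^ ((3:ℝ))⁻¹ * (2:ℝ) ^ ((3:ℝ))⁻¹ = 2 := by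
      rw [← Real.rpow_add (by norm_num : (0:ℝ) < 2), ← Real.rpow_add (by norm_num : (0:ℝ) < 2)]
      norm_num
    have pos1 : (0:ℝ) < (2:ℝ) ^ ((3:ℝ))⁻¹ := Real.rpow_pos_of_pos (by norm_num) _
    have pos2 : (0:ℝ) < (2:ℝ) ^ ((2:ℝ)/3) := Real.rpow_pos_of_pos (by norm_num) _
    have hD : (1 + 2*(2:ℝ)^((3:ℝ))⁻¹ + 4*(2:ℝ)^((2:ℝ)/3)) ≠ 0 := by positivity
    have hc : c13 * (1 + 2*(2:ℝ)^((3:ℝ))⁻¹ + 4*(2:ℝ)^((2:ℝ)/3)) = d13 := by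
      rw [c13, e13]; field_simp
    ext i j
    fin_cases i <;> fin_cases j <;>
      simp [A13, X13, Y13, Matrix.mul_apply, Matrix.vecMul, dotProduct,
        Fin.sum_univ_two, pow_two, Matrix.diagonal] <;>
      norm_cast
    · norm_num
    · linear_combination (norm := (push_cast; ring)) (congrArg Complex.ofReal hc) + 4*(c13:ℂ)*(congrArg Complex.ofReal m1)
    · linear_combination (norm := (push_cast; ring)) (congrArg Complex.ofReal hc) + 4*(c13:ℂ)*(congrArg Complex.ofReal m1)
    · linear_combination (norm := (push_cast; ring)) (16:ℂ)*(congrArg Complex.ofReal hcube)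
  · -- PosDef
    rw [Matrix.posDef_iff_dotProduct_mulVec]
    constructor
    · ext i j
      fin_cases i <;> fin_cases j <;>
        simp [X13, Matrix.conjTranspose_apply]
    · intro x hx
      have hval : dotProduct (star x) (X13.mulVec x)
          = (((4/3) * ((x 0).re^2 + (x 0).im^2)
              + 2 * c13 * ((x 0).re * (x 1).re + (x 0).im * (x 1).im)
              + (4 * (2:ℝ)^((1:ℝ)/3) / 3) * ((x 1).re^2 + (x 1).im^2) : ℝ) : ℂ) := by
        simp [X13, Matrix.mulVec, dotProduct, Fin.sum_univ_two, Complex.ext_iff,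
          Complex.add_re, Complex.add_im, Complex.mul_re, Complex.mul_im,
          ← Complex.ofReal_pow]
        constructor <;> ring
      rw [hval, Complex.zero_lt_real]
      set a := (x 0).re
      set b := (x 0).im
      set u := (x 1).re
      set v := (x 1).im
      have hk := csq_13
      have hrp := rpos_13
      by_cases h1 : x 1 = 0
      · have h0 : x 0 ≠ 0 := by
          intro h0; exact hx (funext fun i => by fin_cases i <;> simp [h0, h1])
        have : a ≠ 0 ∨ b ≠ 0 := by
          by_contra hab
          push_neg at hab
          exact h0 (Complex.ext hab.1 hab.2)
        have hu : u = 0 := by simp [u, h1]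
        have hv : v = 0 := by simp [v, h1]
        have hab2 : 0 < a^2 + b^2 := by
          rcases this with h | h <;> positivity
        rw [hu, hv]
        nlinarith
      · have huv : 0 < u^2 + v^2 := by
          have : u ≠ 0 ∨ v ≠ 0 := by
            by_contra hab
            push_neg at hab
            exact h1 (Complex.ext hab.1 hab.2)
          rcases this with h | h <;> positivity
        nlinarith [sq_nonneg (a + 3*c13/4*u), sq_nonneg (b + 3*c13/4*v),
          mul_pos (by nlinarith : (0:ℝ) < 4*(2:ℝ)^((1:ℝ)/3)/3 - 3*c13^2/4) huv]
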